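/- arXiv:2306.09694 — 2 statements merged into one kernel-verified Lean document; each statement's English description precedes it below -/
import Mathlib

section
/- Let 0 < μ ≤ L, let f ∈ S¹_{μ,L}(ℝ^d), let g : ℝ^d → ℝ be convex and continuous, set Φ = f + g, and let 0 < s < 1/L. Then for all x, y ∈ ℝ^d, Φ(y − sG_s(y)) − Φ(x) ≤ ⟨G_s(y), y − x⟩ − (s/2)‖G_s(y)‖² − (μ/2)‖y − x‖². -/
open scoped RealInnerProductSpace

variable {E : Type*} [NormedAddCommGroup E] [InnerProductSpace ℝ E] [CompleteSpace E]

lemma path_deriv (y v : E) (t : ℝ) : HasDerivAt (fun t : ℝ => y + t • v) v t := by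
  simpa using ((hasDerivAt_id t).smul_const v).const_add y

lemma comp_path {φ : E → ℝ} {G : E} (y v : E) (t : ℝ) (hφ : HasGradientAt φ G (y + t • v)) :
    HasDerivAt (fun t : ℝ => φ (y + t • v)) ⟪G, v⟫ t := by
  have h := hφ.hasFDerivAt.comp_hasDerivAt t (path_deriv y v t)
  simpa [InnerProductSpace.toDual_apply_apply, Function.comp_def] using h

-- first-order inequality for convex differentiable functions
lemma convex_first_order {φ : E → ℝ} (hc : ConvexOn ℝ Set.univ φ) {y G : E}
    (hφ : HasGradientAt φ G y) (x : E) : φ y + ⟪G, x - y⟫ ≤ φ x := by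
  set v := x - y with hv
  have hψ : HasDerivAt (fun t : ℝ => φ (y + t • v)) ⟪G, v⟫ 0 :=
    comp_path y v 0 (by simpa using hφ)
  have hslope : Filter.Tendsto (slope (fun t : ℝ => φ (y + t • v)) 0) (nhdsWithin 0 (Set.Ioi 0))
      (nhds ⟪G, v⟫) :=
    (hasDerivAt_iff_tendsto_slope.mp hψ).mono_left
      (nhdsWithin_mono _ (fun t ht => ne_of_gt ht))
  have hbound : ∀ᶠ t in nhdsWithin (0:ℝ) (Set.Ioi 0),
      slope (fun t : ℝ => φ (y + t • v)) 0 t ≤ φ x - φ y := by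
    filter_upwards [Ioc_mem_nhdsGT_of_mem (by norm_num : (0:ℝ) ∈ Set.Ico 0 1)] with t ht
    have h01 : 0 < t := ht.1
    have hcomb := hc.2 (Set.mem_univ y) (Set.mem_univ x) (by linarith [ht.2] : (0:ℝ) ≤ 1 - t)
      (le_of_lt h01) (by ring)
    have hpt : y + t • v = (1 - t) • y + t • x := by
      rw [hv]; module
    rw [slope_def_field, sub_zero, div_le_iff₀ h01]
    simp only [zero_smul, add_zero, hpt]
    simp only [smul_eq_mul] at hcomb
    nlinarith [hcomb]
  have := le_of_tendsto hslope hbound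
  linarith

-- descent lemma
lemma descent_lemma {L : ℝ} (hL : 0 ≤ L) {f : E → ℝ} {f' : E → E}
    (hdiff : ∀ z, HasGradientAt f (f' z) z)
    (hlip : ∀ z w, ‖f' z - f' w‖ ≤ L * ‖z - w‖) (y p : E) :
    f p ≤ f y + ⟪f' y, p - y⟫ + L / 2 * ‖p - y‖ ^ 2 := by
  set v := p - y with hv
  have hf'cont : Continuous f' := by
    have : LipschitzWith ⟨L, hL⟩ f' := by
      apply LipschitzWith.of_dist_le_mul
      intro a b; rw [dist_eq_norm, dist_eq_norm]; exact hlip a b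
    exact this.continuous
  have hD : ∀ t : ℝ, HasDerivAt (fun t : ℝ => f (y + t • v)) ⟪f' (y + t • v), v⟫ t :=
    fun t => comp_path y v t (hdiff _)
  have hDcont : Continuous (fun t : ℝ => ⟪f' (y + t • v), v⟫) :=
    (hf'cont.comp (continuous_const.add (continuous_id.smul continuous_const))).inner
      continuous_const
  have hftc : f (y + (1:ℝ) • v) - f (y + (0:ℝ) • v)
      = ∫ t in (0:ℝ)..1, ⟪f' (y + t • v), v⟫ := by
    rw [intervalIntegral.integral_eq_sub_of_hasDerivAt (fun t _ => hD t)
      (hDcont.intervalIntegrable 0 1)]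
  have hmono : ∫ t in (0:ℝ)..1, ⟪f' (y + t • v), v⟫
      ≤ ∫ t in (0:ℝ)..1, (⟪f' y, v⟫ + L * ‖v‖ ^ 2 * t) := by
    apply intervalIntegral.integral_mono_on (by norm_num) (hDcont.intervalIntegrable 0 1)
      ((continuous_const.add (continuous_const.mul continuous_id')).intervalIntegrable 0 1)
    intro t ht
    have key : ⟪f' (y + t • v) - f' y, v⟫ ≤ L * ‖v‖ ^ 2 * t := by
      calc ⟪f' (y + t • v) - f' y, v⟫ ≤ ‖f' (y + t • v) - f' y‖ * ‖v‖ := real_inner_le_norm _ _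
        _ ≤ (L * ‖(y + t • v) - y‖) * ‖v‖ :=
            mul_le_mul_of_nonneg_right (hlip _ _) (norm_nonneg v)
        _ = L * ‖v‖ ^ 2 * t := by
            rw [add_sub_cancel_left, norm_smul, Real.norm_eq_abs, abs_of_nonneg ht.1]; ring
    rw [inner_sub_left] at key
    simp only [Pi.add_apply, Pi.mul_apply]
    linarith
  have hint : ∫ t in (0:ℝ)..1, (⟪f' y, v⟫ + L * ‖v‖ ^ 2 * t)
      = ⟪f' y, v⟫ + L / 2 * ‖v‖ ^ 2 := by
    rw [intervalIntegral.integral_add (f := fun _ => ⟪f' y, v⟫) (g := fun t : ℝ => L * ‖v‖ ^ 2 * t)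
      (intervalIntegrable_const)
      ((continuous_const.mul continuous_id').intervalIntegrable 0 1),
      intervalIntegral.integral_const, intervalIntegral.integral_const_mul, integral_id]
    simp; ring
  have : f (y + (1:ℝ) • v) - f (y + (0:ℝ) • v) ≤ ⟪f' y, v⟫ + L / 2 * ‖v‖ ^ 2 := by
    rw [hftc]; linarith
  simp only [one_smul, zero_smul, add_zero, hv, add_sub_cancel] at this
  linarith

-- subgradient inequality from prox optimality
lemma prox_subgrad {s : ℝ} (hs : 0 < s) {c : E} {g : E → ℝ}
    (hg : ConvexOn ℝ Set.univ g) {p : E}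
    (hp : ∀ w, 1 / (2 * s) * ‖p - c‖ ^ 2 + g p ≤ 1 / (2 * s) * ‖w - c‖ ^ 2 + g w)
    (x : E) : g p ≤ g x + s⁻¹ * ⟪p - c, x - p⟫ := by
  set I : ℝ := ⟪p - c, x - p⟫ with hI
  set A : ℝ := s⁻¹ * I + g x - g p with hA
  set C : ℝ := ‖x - p‖ ^ 2 / (2 * s) with hC
  have hCpos : 0 ≤ C := by rw [hC]; positivity
  have hkey : ∀ t : ℝ, 0 < t → t ≤ 1 → -(t * C) ≤ A := by
    intro t ht0 ht1
    have h := hp (p + t • (x - p))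
    have hg2 := hg.2 (Set.mem_univ p) (Set.mem_univ x) (by linarith : (0:ℝ) ≤ 1 - t)
      (le_of_lt ht0) (by ring)
    have hpt : p + t • (x - p) = (1 - t) • p + t • x := by module
    have hnorm : ‖p + t • (x - p) - c‖ ^ 2
        = ‖p - c‖ ^ 2 + 2 * (t * I) + t ^ 2 * ‖x - p‖ ^ 2 := by
      have h0 : p + t • (x - p) - c = (p - c) + t • (x - p) := by abel
      rw [hI, h0, norm_add_sq_real, real_inner_smul_right, norm_smul, Real.norm_eq_abs,
        mul_pow, sq_abs]
    rw [hnorm] at h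
    have hgt : g (p + t • (x - p)) ≤ (1 - t) * g p + t * g x := by
      rw [hpt]; simpa using hg2
    have expand : 1 / (2 * s) * (‖p - c‖ ^ 2 + 2 * (t * I) + t ^ 2 * ‖x - p‖ ^ 2)
        = 1 / (2 * s) * ‖p - c‖ ^ 2 + t * (s⁻¹ * I) + t * (t * C) := by
      rw [hC]; field_simp
    have key2 : 0 ≤ t * (A + t * C) := by
      have : 0 ≤ t * (s⁻¹ * I) + t * (t * C) + t * g x - t * g p := by linarith
      rw [hA]; ring_nf; ring_nf at this; linarith
    have := div_nonneg key2 ht0.le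
    rw [mul_comm, mul_div_assoc, div_self (ne_of_gt ht0), mul_one] at this
    linarith
  by_contra hneg
  push_neg at hneg
  have hAneg : A < 0 := by rw [hA]; linarith
  rcases eq_or_lt_of_le hCpos with hC0 | hC0
  · have := hkey 1 one_pos le_rfl
    rw [← hC0] at this; simp at this; linarith
  · set t₀ : ℝ := min 1 (-A / (2 * C)) with ht₀
    have ht₀0 : 0 < t₀ := lt_min one_pos (div_pos (by linarith) (by linarith))
    have ht₀1 : t₀ ≤ 1 := min_le_left _ _
    have h2 : t₀ * (2 * C) ≤ -A := by
      calc t₀ * (2 * C) ≤ (-A / (2 * C)) * (2 * C) := by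
            apply mul_le_mul_of_nonneg_right (min_le_right _ _); linarith
        _ = -A := by field_simp
    have h3 := hkey t₀ ht₀0 ht₀1
    nlinarith [mul_pos ht₀0 hC0]

lemma grad_norm_sq (μ : ℝ) (y : E) :
    HasGradientAt (fun z : E => μ / 2 * ‖z‖ ^ 2) (μ • y) y := by
  have h1 : HasFDerivAt (fun z : E => ⟪z, z⟫)
      ((fderivInnerCLM ℝ (y, y)).comp ((ContinuousLinearMap.id ℝ E).prod
        (ContinuousLinearMap.id ℝ E))) y :=
    (hasFDerivAt_id y).inner ℝ (hasFDerivAt_id y)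
  have h2 : HasFDerivAt (fun z : E => μ / 2 * ⟪z, z⟫)
      ((μ / 2) • ((fderivInnerCLM ℝ (y, y)).comp ((ContinuousLinearMap.id ℝ E).prod
        (ContinuousLinearMap.id ℝ E)))) y := h1.const_mul (μ / 2)
  have heq : (fun z : E => μ / 2 * ⟪z, z⟫) = (fun z : E => μ / 2 * ‖z‖ ^ 2) := by
    funext z; rw [real_inner_self_eq_norm_sq]
  have hmap : ((μ / 2) • ((fderivInnerCLM ℝ (y, y)).comp ((ContinuousLinearMap.id ℝ E).prod
      (ContinuousLinearMap.id ℝ E)))) = (InnerProductSpace.toDual ℝ E) (μ • y) := by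
    ext v
    simp [fderivInnerCLM_apply, InnerProductSpace.toDual_apply_apply, real_inner_smul_left,
      real_inner_comm]
    ring
  rw [HasGradientAt, HasGradientAtFilter, ← hmap, ← heq]
  exact h2

lemma strong_convex_lb {μ : ℝ} {f : E → ℝ} {f' : E → E}
    (hdiff : ∀ z, HasGradientAt f (f' z) z)
    (hsc : ConvexOn ℝ Set.univ (fun z => f z - μ / 2 * ‖z‖ ^ 2))
    (x y : E) : f y + ⟪f' y, x - y⟫ + μ / 2 * ‖x - y‖ ^ 2 ≤ f x := by
  have hg : HasGradientAt (fun z => f z - μ / 2 * ‖z‖ ^ 2) (f' y - μ • y) y := by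
    have := (hdiff y).hasFDerivAt.sub (grad_norm_sq μ y).hasFDerivAt
    rw [HasGradientAt, HasGradientAtFilter, map_sub]
    exact this
  have h := convex_first_order hsc hg x
  simp only [inner_sub_left, real_inner_smul_left] at h
  have hexp : ‖x - y‖ ^ 2 = ‖x‖ ^ 2 - 2 * ⟪x, y⟫ + ‖y‖ ^ 2 := norm_sub_sq_real x y
  have hyxy : ⟪y, x - y⟫ = ⟪x, y⟫ - ‖y‖ ^ 2 := by
    rw [inner_sub_right, real_inner_comm, real_inner_self_eq_norm_sq]
  rw [hyxy] at h
  have hexp2 : μ / 2 * ‖x - y‖ ^ 2 = μ / 2 * ‖x‖ ^ 2 - μ * ⟪x, y⟫ + μ / 2 * ‖y‖ ^ 2 := by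
    rw [hexp]; ring
  linarith [h, hexp2]

theorem fundamental_proximal_inequality_strongly_convex {d : ℕ} (μ L s : ℝ)
    (hμ : 0 < μ) (hμL : μ ≤ L) (hs : 0 < s) (hsL : s < 1 / L)
    (f : EuclideanSpace ℝ (Fin d) → ℝ)
    (f' : EuclideanSpace ℝ (Fin d) → EuclideanSpace ℝ (Fin d))
    (hdiff : ∀ z, HasGradientAt f (f' z) z)
    (hlip : ∀ z w, ‖f' z - f' w‖ ≤ L * ‖z - w‖)
    (hsc : ConvexOn ℝ Set.univ (fun z => f z - μ / 2 * ‖z‖ ^ 2))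
    (g : EuclideanSpace ℝ (Fin d) → ℝ)
    (hgconv : ConvexOn ℝ Set.univ g) (hgcont : Continuous g)
    (P G : EuclideanSpace ℝ (Fin d) → EuclideanSpace ℝ (Fin d))
    (hP : ∀ z, IsMinOn (fun w => 1 / (2 * s) * ‖w - (z - s • f' z)‖ ^ 2 + g w) Set.univ (P z))
    (hG : ∀ z, G z = s⁻¹ • (z - P z))
    :
    ∀ x y : EuclideanSpace ℝ (Fin d),
      (f (y - s • G y) + g (y - s • G y)) - (f x + g x) ≤
        ⟪G y, y - x⟫ - s / 2 * ‖G y‖ ^ 2 - μ / 2 * ‖y - x‖ ^ 2 := by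
  intro x y
  have hL0 : 0 < L := lt_of_lt_of_le hμ hμL
  have hsGy : y - s • G y = P y := by
    rw [hG y, smul_smul, mul_inv_cancel₀ (ne_of_gt hs), one_smul, sub_sub_cancel]
  have hPy : P y = y - s • G y := hsGy.symm
  rw [hsGy]
  have h1 := descent_lemma (le_of_lt hL0) hdiff hlip y (P y)
  have h2 := strong_convex_lb hdiff hsc x y
  have h3 := prox_subgrad hs hgconv
    (fun w => (isMinOn_iff.mp (hP y)) w (Set.mem_univ w)) x
  -- rewrite h1
  have e0 : P y - y = -(s • G y) := by rw [hPy]; abel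
  have e1 : ⟪f' y, P y - y⟫ = -(s * ⟪f' y, G y⟫) := by
    rw [e0, inner_neg_right, real_inner_smul_right]
  have e2 : ‖P y - y‖ ^ 2 = s ^ 2 * ‖G y‖ ^ 2 := by
    rw [e0, norm_neg, norm_smul, Real.norm_eq_abs, abs_of_pos hs, mul_pow]
  rw [e1, e2] at h1
  -- rewrite h2
  have e2a : ⟪f' y, x - y⟫ = -⟪f' y, y - x⟫ := by
    rw [show x - y = -(y - x) by abel, inner_neg_right]
  have e2b : ‖x - y‖ ^ 2 = ‖y - x‖ ^ 2 := by rw [norm_sub_rev]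
  rw [e2a, e2b] at h2
  -- rewrite h3
  have e3 : P y - (y - s • f' y) = s • (f' y - G y) := by rw [hPy]; module
  have e4 : x - P y = -((y - x) - s • G y) := by rw [hPy]; module
  have e5 : s⁻¹ * ⟪P y - (y - s • f' y), x - P y⟫
      = ⟪G y, y - x⟫ + s * ⟪f' y, G y⟫ - ⟪f' y, y - x⟫ - s * ‖G y‖ ^ 2 := by
    rw [e3, e4]
    simp only [inner_neg_right, inner_sub_left, inner_sub_right, real_inner_smul_left,
      real_inner_smul_right, real_inner_self_eq_norm_sq]
    field_simp
    ring
  rw [e5] at h3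
  have hn : (0:ℝ) ≤ ‖G y‖ ^ 2 := sq_nonneg _
  have hLs : L * s ≤ 1 := by
    have := (lt_div_iff₀ hL0).mp hsL
    linarith
  have hfrac : L / 2 * (s ^ 2 * ‖G y‖ ^ 2) ≤ s / 2 * ‖G y‖ ^ 2 := by
    nlinarith [mul_nonneg hs.le hn]
  linarith
end

section
/- Let 0 < μ ≤ L, let f ∈ S²_{μ,L}(ℝ^d) with unique minimizer x⋆, let 0 < s < 1/L, and let X : (0,∞) → ℝ^d be a twice differentiable solution of the gradient-correction high-resolution ODE. Then for all t ≥ 4/(μ√s), the continuous Lyapunov function satisfies (d/dt)E(t) ≤ −(μ√s/4)·E(t). -/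
open scoped RealInnerProductSpace

/-- The continuous Lyapunov function
`E(t) = 2t(t+√s)(F(X t) - F(x⋆)) + (t²/2)‖Ẋ(t)‖²
        + (1/2)‖tẊ(t) + 2(X(t) - x⋆) + t√s∇F(X t)‖²`. -/
noncomputable def contLyap {d : ℕ} (s : ℝ) (F : EuclideanSpace ℝ (Fin d) → ℝ)
    (F' : EuclideanSpace ℝ (Fin d) → EuclideanSpace ℝ (Fin d))
    (X V : ℝ → EuclideanSpace ℝ (Fin d)) (xstar : EuclideanSpace ℝ (Fin d)) (t : ℝ) : ℝ :=
  2 * t * (t + Real.sqrt s) * (F (X t) - F xstar) + t ^ 2 / 2 * ‖V t‖ ^ 2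
    + 1 / 2 * ‖t • V t + (2 : ℝ) • (X t - xstar) + (t * Real.sqrt s) • F' (X t)‖ ^ 2

lemma aux_norm_add3_sq {d : ℕ} (x y z : EuclideanSpace ℝ (Fin d)) :
    ‖x + y + z‖ ^ 2 ≤ 3 * (‖x‖ ^ 2 + ‖y‖ ^ 2 + ‖z‖ ^ 2) := by
  have h1 := norm_add_sq_real (x + y) z
  have h2 := norm_add_sq_real x y
  have h3 : ⟪x + y, z⟫ = ⟪x, z⟫ + ⟪y, z⟫ := inner_add_left x y z
  have e1 := norm_sub_sq_real x y
  have e2 := norm_sub_sq_real x z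
  have e3 := norm_sub_sq_real y z
  have i1 : ⟪x, y⟫ = ⟪x, y⟫ := rfl
  nlinarith [sq_nonneg ‖x - y‖, sq_nonneg ‖x - z‖, sq_nonneg ‖y - z‖]

lemma aux_sc {d : ℕ} {μ : ℝ}
    (f : EuclideanSpace ℝ (Fin d) → ℝ) (f' : EuclideanSpace ℝ (Fin d) → EuclideanSpace ℝ (Fin d))
    (hdiff : ∀ z, HasGradientAt f (f' z) z)
    (hsc : ConvexOn ℝ Set.univ (fun z => f z - μ / 2 * ‖z‖ ^ 2))
    (z w : EuclideanSpace ℝ (Fin d)) :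
    f z + ⟪f' z, w - z⟫ + μ / 2 * ‖w - z‖ ^ 2 ≤ f w := by
  set u := w - z with hu
  set φ : ℝ → ℝ := fun τ => f (z + τ • u) - μ / 2 * ‖z + τ • u‖ ^ 2 with hφdef
  -- derivative of the line
  have hline : ∀ τ : ℝ, HasDerivAt (fun τ : ℝ => z + τ • u) u τ := by
    intro τ
    simpa using ((hasDerivAt_id τ).smul_const u).const_add z
  -- derivative of f along the line at 0
  have hf0 : HasDerivAt (fun τ : ℝ => f (z + τ • u)) ⟪f' z, u⟫ 0 := by
    have h := ((hdiff (z + (0:ℝ) • u)).hasFDerivAt.comp_hasDerivAt 0 (hline 0))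
    refine h.congr_deriv ?_
    simp [InnerProductSpace.toDual_apply_apply]
  -- derivative of the quadratic along the line at 0
  have hq : ∀ τ : ℝ, ‖z + τ • u‖ ^ 2 = ‖z‖ ^ 2 + 2 * τ * ⟪z, u⟫ + τ ^ 2 * ‖u‖ ^ 2 := by
    intro τ
    have := norm_add_sq_real z (τ • u)
    rw [this, real_inner_smul_right, norm_smul]
    simp [mul_pow]
    ring
  have hq0 : HasDerivAt (fun τ : ℝ => μ / 2 * ‖z + τ • u‖ ^ 2) (μ * ⟪z, u⟫) 0 := by
    have : HasDerivAt (fun τ : ℝ => μ / 2 * (‖z‖ ^ 2 + 2 * τ * ⟪z, u⟫ + τ ^ 2 * ‖u‖ ^ 2))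
        (μ * ⟪z, u⟫) 0 := by
      have h1 : HasDerivAt (fun τ : ℝ => ‖z‖ ^ 2 + 2 * τ * ⟪z, u⟫ + τ ^ 2 * ‖u‖ ^ 2)
          (2 * ⟪z, u⟫) 0 := by
        have := (((hasDerivAt_id (0:ℝ)).const_mul 2).mul_const ⟪z, u⟫).const_add (‖z‖ ^ 2)
        have h2 := ((hasDerivAt_pow 2 (0:ℝ)).mul_const (‖u‖ ^ 2))
        refine (this.add h2).congr_deriv ?_
        simp
      have := h1.const_mul (μ / 2)
      refine this.congr_deriv ?_
      ring
    simpa only [hq] using this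
  have hφd : HasDerivAt φ (⟪f' z, u⟫ - μ * ⟪z, u⟫) 0 := hf0.sub hq0
  -- convexity of φ
  have hφc : ConvexOn ℝ Set.univ φ := by
    have h := hsc.comp_affineMap (AffineMap.lineMap z w : ℝ →ᵃ[ℝ] _)
    have : (fun τ : ℝ => f (z + τ • u) - μ / 2 * ‖z + τ • u‖ ^ 2)
        = (fun y => f y - μ / 2 * ‖y‖ ^ 2) ∘ (AffineMap.lineMap z w : ℝ →ᵃ[ℝ] _) := by
      funext τ
      simp only [Function.comp_apply, AffineMap.lineMap_apply, vsub_eq_sub, vadd_eq_add, ← hu,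
        add_comm (τ • u) z]
    rw [hφdef, this]
    simpa using h
  -- derivative ≤ slope
  have hslope : ⟪f' z, u⟫ - μ * ⟪z, u⟫ ≤ φ 1 - φ 0 := by
    have htend : Filter.Tendsto (slope φ 0) (nhdsWithin 0 (Set.Ioi 0)) (nhds (⟪f' z, u⟫ - μ * ⟪z, u⟫)) := by
      refine (hasDerivAt_iff_tendsto_slope.mp hφd).mono_left ?_
      exact nhdsWithin_mono 0 (fun x hx => ne_of_gt hx)
    refine le_of_tendsto htend ?_
    filter_upwards [Ioo_mem_nhdsGT_of_mem (by norm_num : (0:ℝ) ∈ Set.Ico 0 1)] with τ hτ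
    have h01 : 0 < τ ∧ τ < 1 := ⟨hτ.1, hτ.2⟩
    have hconv := hφc.2 (Set.mem_univ (1:ℝ)) (Set.mem_univ (0:ℝ))
      (le_of_lt h01.1) (by linarith [h01.2] : (0:ℝ) ≤ 1 - τ) (by ring)
    simp only [smul_eq_mul, mul_one, mul_zero, add_zero] at hconv
    rw [slope_def_field, sub_zero, div_le_iff₀ h01.1]
    nlinarith [hconv]
  -- assemble
  have hφ1 : φ 1 = f w - μ / 2 * ‖w‖ ^ 2 := by
    simp [hφdef, hu]
  have hφ0 : φ 0 = f z - μ / 2 * ‖z‖ ^ 2 := by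
    simp [hφdef]
  rw [hφ1, hφ0] at hslope
  have e1 : ‖u‖ ^ 2 = ‖w‖ ^ 2 - 2 * ⟪w, z⟫ + ‖z‖ ^ 2 := by
    rw [hu]; exact norm_sub_sq_real w z
  have e2 : ⟪z, u⟫ = ⟪z, w⟫ - ‖z‖ ^ 2 := by
    rw [hu, inner_sub_right, real_inner_self_eq_norm_sq]
  have e3 : ⟪z, w⟫ = ⟪w, z⟫ := real_inner_comm w z
  have e1' : μ / 2 * ‖u‖ ^ 2 = μ / 2 * (‖w‖ ^ 2 - 2 * ⟪w, z⟫ + ‖z‖ ^ 2) := by rw [e1]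
  have e2' : μ * ⟪z, u⟫ = μ * (⟪w, z⟫ - ‖z‖ ^ 2) := by rw [e2, e3]
  nlinarith [hslope, e1', e2']

set_option maxHeartbeats 1000000 in
theorem gradient_correction_ode_lyapunov_derivative {d : ℕ} (μ L s : ℝ)
    (hμ : 0 < μ) (hμL : μ ≤ L) (hs : 0 < s) (hsL : s < 1 / L)
    (f : EuclideanSpace ℝ (Fin d) → ℝ)
    (f' : EuclideanSpace ℝ (Fin d) → EuclideanSpace ℝ (Fin d))
    (hf2 : ContDiff ℝ 2 f)
    (hdiff : ∀ z, HasGradientAt f (f' z) z)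
    (hlip : ∀ z w, ‖f' z - f' w‖ ≤ L * ‖z - w‖)
    (hsc : ConvexOn ℝ Set.univ (fun z => f z - μ / 2 * ‖z‖ ^ 2))
    (xstar : EuclideanSpace ℝ (Fin d)) (hmin : ∀ z, f xstar ≤ f z)
    (huniq : ∀ z, (∀ w, f z ≤ f w) → z = xstar)
    (X X' X'' G' : ℝ → EuclideanSpace ℝ (Fin d))
    (hX : ∀ t : ℝ, 0 < t → HasDerivAt X (X' t) t)
    (hX' : ∀ t : ℝ, 0 < t → HasDerivAt X' (X'' t) t)
    (hG' : ∀ t : ℝ, 0 < t → HasDerivAt (fun τ => f' (X τ)) (G' t) t)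
    (hode : ∀ t : ℝ, 0 < t →
      X'' t + (3 / t) • X' t + Real.sqrt s • G' t
        + (1 + 3 * Real.sqrt s / (2 * t)) • f' (X t) = 0)
    :
    ∀ t : ℝ, 4 / (μ * Real.sqrt s) ≤ t →
      deriv (contLyap s f f' X X' xstar) t ≤
        -(μ * Real.sqrt s / 4) * contLyap s f f' X X' xstar t := by
  -- first-order strong convexity
  have SC : ∀ z w, f z + ⟪f' z, w - z⟫ + μ / 2 * ‖w - z‖ ^ 2 ≤ f w :=
    fun z w => aux_sc f f' hdiff hsc z w
  have Qge : ∀ z, (f z - f xstar) + μ / 2 * ‖z - xstar‖ ^ 2 ≤ ⟪f' z, z - xstar⟫ := by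
    intro z
    have h := SC z xstar
    have h1 : ⟪f' z, xstar - z⟫ = -⟪f' z, z - xstar⟫ := by rw [← inner_neg_right, neg_sub]
    have h2 : ‖xstar - z‖ = ‖z - xstar‖ := norm_sub_rev _ _
    rw [h1, h2] at h
    linarith
  have PL : ∀ z, 2 * μ * (f z - f xstar) ≤ ‖f' z‖ ^ 2 := by
    intro z
    have h := SC z xstar
    nlinarith [h, abs_real_inner_le_norm (f' z) (xstar - z),
      neg_abs_le (⟪f' z, xstar - z⟫), sq_nonneg (‖f' z‖ - μ * ‖xstar - z‖), hμ.le,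
      norm_nonneg (xstar - z), norm_nonneg (f' z)]
  have mono : ∀ z w, μ * ‖z - w‖ ^ 2 ≤ ⟪f' z - f' w, z - w⟫ := by
    intro z w
    have s1 := SC z w
    have s2 := SC w z
    have e1 : ⟪f' z, w - z⟫ = -⟪f' z, z - w⟫ := by rw [← inner_neg_right, neg_sub]
    have e2 : ⟪f' z - f' w, z - w⟫ = ⟪f' z, z - w⟫ - ⟪f' w, z - w⟫ := inner_sub_left _ _ _
    have e3 : ‖w - z‖ = ‖z - w‖ := norm_sub_rev _ _
    rw [e1, e3] at s1
    linarith
  intro t ht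
  set σ := Real.sqrt s with hσdef
  have hσ : 0 < σ := Real.sqrt_pos.mpr hs
  have hσ2 : σ ^ 2 = s := Real.sq_sqrt hs.le
  have hμσ : 0 < μ * σ := mul_pos hμ hσ
  have htpos : 0 < t := lt_of_lt_of_le (by positivity) ht
  have hL : 0 < L := lt_of_lt_of_le hμ hμL
  have hμs1 : μ * σ ^ 2 ≤ 1 := by
    rw [hσ2]
    have h1 : s * L < 1 := (lt_div_iff₀ hL).mp hsL
    nlinarith
  have ht4 : 4 ≤ μ * σ * t := by
    rw [div_le_iff₀ hμσ] at ht; linarith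
  have htσ : σ ≤ t := by nlinarith
  -- scalar abbreviations
  set a := f (X t) - f xstar with ha_def
  set b := ‖X' t‖ ^ 2 with hb_def
  set c := ‖X t - xstar‖ ^ 2 with hc_def
  set dd := ‖f' (X t)‖ ^ 2 with hdd_def
  set p := ⟪f' (X t), X' t⟫ with hp_def
  set q := ⟪f' (X t), X t - xstar⟫ with hq_def
  set r := ⟪G' t, X' t⟫ with hr_def
  -- ODE consequence
  have hX''t : t • X'' t = -((3:ℝ) • X' t + (t * σ) • G' t + (t + 3 * σ / 2) • f' (X t)) := by
    have h := hode t htpos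
    have h2 : X'' t = -((3 / t) • X' t + σ • G' t + (1 + 3 * σ / (2 * t)) • f' (X t)) := by
      linear_combination (norm := module) h
    rw [h2]
    match_scalars <;> field_simp <;> ring
  -- the auxiliary vector function
  set w : ℝ → EuclideanSpace ℝ (Fin d) :=
    fun τ => τ • X' τ + (2:ℝ) • (X τ - xstar) + (τ * σ) • f' (X τ) with hw_def
  set W := ‖w t‖ ^ 2 with hW_def
  -- derivative of w
  have hwd : HasDerivAt w ((-(t + σ / 2)) • f' (X t)) t := by
    have h1 : HasDerivAt (fun τ : ℝ => τ • X' τ) (t • X'' t + (1:ℝ) • X' t) t :=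
      (hasDerivAt_id t).smul (hX' t htpos)
    have h2 : HasDerivAt (fun τ : ℝ => (2:ℝ) • (X τ - xstar)) ((2:ℝ) • X' t) t :=
      ((hX t htpos).sub_const xstar).const_smul (2:ℝ)
    have h3 : HasDerivAt (fun τ : ℝ => (τ * σ) • f' (X τ)) ((t * σ) • G' t + σ • f' (X t)) t := by
      have := ((hasDerivAt_id t).mul_const σ).smul (hG' t htpos)
      refine this.congr_deriv ?_
      simp
    have h := (h1.add h2).add h3
    refine h.congr_deriv ?_
    rw [hX''t]
    module
  -- derivative of f ∘ X
  have hfX : HasDerivAt (fun τ => f (X τ)) p t := by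
    have h := (hdiff (X t)).hasFDerivAt.comp_hasDerivAt t (hX t htpos)
    exact h
  -- the Lyapunov function in inner-product form
  have hEfun : contLyap s f f' X X' xstar = fun τ =>
      (2 * τ ^ 2 + 2 * σ * τ) * (f (X τ) - f xstar) + τ ^ 2 / 2 * ⟪X' τ, X' τ⟫
        + 1 / 2 * ⟪w τ, w τ⟫ := by
    funext τ
    simp only [contLyap, real_inner_self_eq_norm_sq, hw_def, ← hσdef]
    ring
  -- derivative of each term
  have hT1 : HasDerivAt (fun τ => (2 * τ ^ 2 + 2 * σ * τ) * (f (X τ) - f xstar))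
      ((4 * t + 2 * σ) * a + (2 * t ^ 2 + 2 * σ * t) * p) t := by
    have hpoly : HasDerivAt (fun τ : ℝ => 2 * τ ^ 2 + 2 * σ * τ) (4 * t + 2 * σ) t := by
      have h := ((hasDerivAt_pow 2 t).const_mul 2).add ((hasDerivAt_id t).const_mul (2 * σ))
      refine h.congr_deriv ?_
      push_cast
      ring
    exact hpoly.mul (hfX.sub_const (f xstar))
  have hT2 : HasDerivAt (fun τ => τ ^ 2 / 2 * ⟪X' τ, X' τ⟫)
      (t * b + t ^ 2 * ⟪X' t, X'' t⟫) t := by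
    have hi := (hX' t htpos).inner ℝ (hX' t htpos)
    have hpoly : HasDerivAt (fun τ : ℝ => τ ^ 2 / 2) t t := by
      have h := (hasDerivAt_pow 2 t).div_const 2
      refine h.congr_deriv ?_
      norm_num
    have := hpoly.mul hi
    refine this.congr_deriv ?_
    rw [hb_def, ← real_inner_self_eq_norm_sq, real_inner_comm (X'' t) (X' t)]
    ring
  have hT3 : HasDerivAt (fun τ => 1 / 2 * ⟪w τ, w τ⟫)
      (-(t + σ / 2) * (t * p + 2 * q + t * σ * dd)) t := by
    have hi := hwd.inner ℝ hwd
    have := hi.const_mul (1/2 : ℝ)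
    refine this.congr_deriv ?_
    have hexp : ⟪w t, (-(t + σ / 2)) • f' (X t)⟫ = -(t + σ / 2) * ⟪w t, f' (X t)⟫ :=
      real_inner_smul_right _ _ _
    have hexp2 : ⟪(-(t + σ / 2)) • f' (X t), w t⟫ = -(t + σ / 2) * ⟪f' (X t), w t⟫ :=
      real_inner_smul_left _ _ _
    have hwf : ⟪w t, f' (X t)⟫ = t * p + 2 * q + t * σ * dd := by
      simp only [hw_def, inner_add_left, real_inner_smul_left, hp_def, hq_def, hdd_def]
      rw [real_inner_comm (X' t) (f' (X t)), real_inner_comm (X t - xstar) (f' (X t)),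
        real_inner_self_eq_norm_sq]
    rw [hexp, hexp2, real_inner_comm (w t) (f' (X t)), hwf]
    ring
  have hE : HasDerivAt (contLyap s f f' X X' xstar)
      ((4 * t + 2 * σ) * a + (2 * t ^ 2 + 2 * σ * t) * p + (t * b + t ^ 2 * ⟪X' t, X'' t⟫)
        + -(t + σ / 2) * (t * p + 2 * q + t * σ * dd)) t := by
    rw [hEfun]
    exact (hT1.add hT2).add hT3
  rw [hE.deriv]
  -- evaluate ⟪X' t, X'' t⟫
  have hXX : t ^ 2 * ⟪X' t, X'' t⟫ = -(3 * t * b) - σ * t ^ 2 * r - (t ^ 2 + 3 * σ * t / 2) * p := by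
    have h : t ^ 2 * ⟪X' t, X'' t⟫ = t * ⟪X' t, t • X'' t⟫ := by
      rw [real_inner_smul_right]; ring
    rw [h, hX''t]
    simp only [inner_neg_right, inner_add_right, real_inner_smul_right]
    rw [hb_def, ← real_inner_self_eq_norm_sq, hr_def, real_inner_comm (X' t) (G' t),
      hp_def, real_inner_comm (X' t) (f' (X t))]
    ring
  -- value of contLyap at t
  have hEval : contLyap s f f' X X' xstar t
      = (2 * t ^ 2 + 2 * σ * t) * a + t ^ 2 / 2 * b + 1 / 2 * W := by
    rw [hEfun]
    simp only [hW_def, real_inner_self_eq_norm_sq]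
    rfl
  rw [hEval, hXX]
  -- scalar inequalities
  have ha : 0 ≤ a := by have := hmin (X t); rw [ha_def]; linarith
  have hb : 0 ≤ b := by positivity
  have hc : 0 ≤ c := by positivity
  have hdd : 0 ≤ dd := by positivity
  have hW0 : 0 ≤ W := by positivity
  have hqge : a + μ / 2 * c ≤ q := by
    rw [ha_def, hc_def, hq_def]
    exact Qge (X t)
  have hdpl : 2 * μ * a ≤ dd := by
    rw [ha_def, hdd_def]
    exact PL (X t)
  have hrge : μ * b ≤ r := by
    have hXs := hasDerivAt_iff_tendsto_slope.mp (hX t htpos)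
    have hGs := hasDerivAt_iff_tendsto_slope.mp (hG' t htpos)
    have hten : Filter.Tendsto (fun y => ⟪slope (fun τ => f' (X τ)) t y, slope X t y⟫)
        (nhdsWithin t {t}ᶜ) (nhds r) := hGs.inner hXs
    have hten2 : Filter.Tendsto (fun y => μ * ‖slope X t y‖ ^ 2)
        (nhdsWithin t {t}ᶜ) (nhds (μ * b)) := by
      exact ((hXs.norm.pow 2).const_mul μ)
    refine le_of_tendsto_of_tendsto' hten2 hten ?_
    intro y
    have hm := mono (X y) (X t)
    simp only [slope_def_module]
    rw [real_inner_smul_left, real_inner_smul_right, norm_smul]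
    have : ((y - t)⁻¹ * ((y - t)⁻¹ * ⟪f' (X y) - f' (X t), X y - X t⟫))
        = ((y - t)⁻¹)^2 * ⟪f' (X y) - f' (X t), X y - X t⟫ := by ring
    rw [this]
    have h2 : (‖(y - t)⁻¹‖ * ‖X y - X t‖) ^ 2 = ((y - t)⁻¹)^2 * ‖X y - X t‖ ^ 2 := by
      rw [mul_pow, Real.norm_eq_abs, sq_abs]
    rw [h2]
    have h3 := mul_le_mul_of_nonneg_left hm (sq_nonneg ((y - t)⁻¹))
    linarith [h3]
  have hW3 : W ≤ 3 * (t ^ 2 * b + 4 * c + σ ^ 2 * t ^ 2 * dd) := by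
    have h := aux_norm_add3_sq (t • X' t) ((2:ℝ) • (X t - xstar)) ((t * σ) • f' (X t))
    have n1 : ‖t • X' t‖ ^ 2 = t ^ 2 * b := by
      rw [norm_smul, mul_pow, Real.norm_eq_abs, sq_abs, hb_def]
    have n2 : ‖(2:ℝ) • (X t - xstar)‖ ^ 2 = 4 * c := by
      rw [norm_smul, mul_pow, Real.norm_eq_abs, sq_abs, hc_def]; norm_num
    have n3 : ‖(t * σ) • f' (X t)‖ ^ 2 = σ ^ 2 * t ^ 2 * dd := by
      rw [norm_smul, mul_pow, Real.norm_eq_abs, sq_abs, hdd_def]; ring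
    rw [hW_def, hw_def]
    calc ‖t • X' t + (2:ℝ) • (X t - xstar) + (t * σ) • f' (X t)‖ ^ 2
        ≤ 3 * (‖t • X' t‖ ^ 2 + ‖(2:ℝ) • (X t - xstar)‖ ^ 2 + ‖(t * σ) • f' (X t)‖ ^ 2) := h
      _ = 3 * (t ^ 2 * b + 4 * c + σ ^ 2 * t ^ 2 * dd) := by rw [n1, n2, n3]
  -- final assembly
  have P1 : σ * t ^ 2 * (μ * b) ≤ σ * t ^ 2 * r :=
    mul_le_mul_of_nonneg_left hrge (by positivity)
  have P2 : (2 * t + σ) * (a + μ / 2 * c) ≤ (2 * t + σ) * q :=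
    mul_le_mul_of_nonneg_left hqge (by positivity)
  have P3 : μ * σ / 8 * W ≤ μ * σ / 8 * (3 * (t ^ 2 * b + 4 * c + σ ^ 2 * t ^ 2 * dd)) :=
    mul_le_mul_of_nonneg_left hW3 (by positivity)
  have hk : 0 ≤ σ * t * (t + σ / 2) - 3 * μ * σ ^ 3 * t ^ 2 / 8 := by
    have h1 : μ * σ ^ 2 * (3 / 8 * σ * t ^ 2) ≤ 1 * (3 / 8 * σ * t ^ 2) :=
      mul_le_mul_of_nonneg_right hμs1 (by positivity)
    have h2 : (0:ℝ) ≤ σ * t ^ 2 := by positivity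
    have h3 : (0:ℝ) ≤ σ ^ 2 * t := by positivity
    linarith only [h1, h2, h3]
  have P4 : (σ * t * (t + σ / 2) - 3 * μ * σ ^ 3 * t ^ 2 / 8) * (2 * μ * a)
      ≤ (σ * t * (t + σ / 2) - 3 * μ * σ ^ 3 * t ^ 2 / 8) * dd :=
    mul_le_mul_of_nonneg_left hdpl hk
  have P5 : (2 * t + σ + μ * σ / 2 * t ^ 2 + μ * σ ^ 2 / 2 * t - 2 * μ * σ * t ^ 2
      - μ * σ ^ 2 * t + 3 / 4 * μ ^ 2 * σ ^ 3 * t ^ 2) * a ≤ 0 := by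
    have hcoef : 2 * t + σ + μ * σ / 2 * t ^ 2 + μ * σ ^ 2 / 2 * t - 2 * μ * σ * t ^ 2
        - μ * σ ^ 2 * t + 3 / 4 * μ ^ 2 * σ ^ 3 * t ^ 2 ≤ 0 := by
      have g1 : μ * σ ^ 2 * (3 / 4 * (μ * σ * t ^ 2)) ≤ 1 * (3 / 4 * (μ * σ * t ^ 2)) :=
        mul_le_mul_of_nonneg_right hμs1 (by positivity)
      have g2 : 4 * (3 / 4 * t) ≤ μ * σ * t * (3 / 4 * t) :=
        mul_le_mul_of_nonneg_right ht4 (by positivity)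
      have g3 : (0:ℝ) ≤ μ * σ ^ 2 / 2 * t := by positivity
      linarith only [g1, g2, g3, htσ]
    exact mul_nonpos_of_nonpos_of_nonneg hcoef ha
  have P6 : 0 ≤ (2 * t + μ * σ * t ^ 2 / 2) * b :=
    mul_nonneg (by positivity) hb
  have P7 : 0 ≤ μ * (t - σ) * c :=
    mul_nonneg (mul_nonneg hμ.le (by linarith)) hc
  linarith only [P1, P2, P3, P4, P5, P6, P7]
end
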